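/- Let q = p^h with p an odd prime, and let G be a subgroup of SL(2,q) of order q² - 1. Then for any two distinct X, Y ∈ G, det(X - Y) ≠ 0. -/

import Mathlib

/-- a subgroup of SL(2,q) of order q²-1 is an affine ovoid:
the difference of any two distinct elements is nonsingular. -/
theorem stmt6 (p h : ℕ) (hp : p.Prime) (hodd : Odd p) (hh : 1 ≤ h)
    (F : Type*) [Field F] [Fintype F] (hcard : Fintype.card F = p ^ h)
    (G : Subgroup (Matrix.SpecialLinearGroup (Fin 2) F))
    (hG : Nat.card G = Fintype.card F ^ 2 - 1) :
    ∀ X ∈ G, ∀ Y ∈ G, X ≠ Y →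
      ((X : Matrix (Fin 2) (Fin 2) F) - (Y : Matrix (Fin 2) (Fin 2) F)).det ≠ 0 := by
  intro X hX Y hY hXY hdet
  -- characteristic : (p : F) = 0
  have hpF : (p : F) = 0 := by
    have h0 : ((Fintype.card F : ℕ) : F) = 0 := FiniteField.cast_card_eq_zero F
    rw [hcard] at h0
    push_cast at h0
    exact pow_eq_zero_iff (by omega) |>.mp h0
  set Z : Matrix.SpecialLinearGroup (Fin 2) F := X * Y⁻¹ with hZ
  have hZG : Z ∈ G := mul_mem hX (inv_mem hY)
  have hZne : Z ≠ 1 := by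
    intro hZ1
    apply hXY
    have hXZY : X = Z * Y := by rw [hZ]; group
    rw [hXZY, hZ1, one_mul]
  set M : Matrix (Fin 2) (Fin 2) F := (Z : Matrix (Fin 2) (Fin 2) F) with hM
  have hdetM : M.det = 1 := Z.2
  -- X - Y = (Z - 1) * Y
  have hfact : (X : Matrix (Fin 2) (Fin 2) F) - Y = (M - 1) * (Y : Matrix (Fin 2) (Fin 2) F) := by
    have hXZY : (X : Matrix (Fin 2) (Fin 2) F) = M * (Y : Matrix (Fin 2) (Fin 2) F) := by
      rw [hM, hZ]
      rw [← Matrix.SpecialLinearGroup.coe_mul]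
      congr 1
      group
      rfl
    rw [Matrix.sub_mul, one_mul, ← hXZY]
  have hdet0 : (M - 1).det = 0 := by
    rw [hfact, Matrix.det_mul, Y.2, mul_one] at hdet
    exact hdet
  -- trace = 2
  have hdetM' := hdetM
  rw [Matrix.det_fin_two] at hdetM'
  have htr : M 0 0 + M 1 1 = 2 := by
    rw [Matrix.det_fin_two] at hdet0
    simp only [Matrix.sub_apply, Matrix.one_apply] at hdet0
    norm_num at hdet0
    linear_combination hdetM' - hdet0
  -- N := M - 1 is nilpotent of square zero
  set N : Matrix (Fin 2) (Fin 2) F := M - 1 with hN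
  have hN2 : N * N = 0 := by
    ext i j
    fin_cases i <;> fin_cases j <;>
      simp only [hN, Matrix.mul_apply, Fin.sum_univ_two, Matrix.sub_apply, Matrix.one_apply,
        Matrix.zero_apply, Fin.isValue, if_true, if_false, Fin.zero_eq_one_iff, Fin.one_eq_zero_iff,
        Nat.succ_ne_self, ite_true, ite_false, eq_self_iff_true, one_ne_zero, zero_ne_one,
        Fin.mk_zero, Fin.mk_one, reduceIte]
    · linear_combination (M 0 0) * htr - hdetM'
    · linear_combination (M 0 1) * htr
    · linear_combination (M 1 0) * htr
    · linear_combination (M 1 1) * htr - hdetM'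
  clear_value N
  have hMN : M = 1 + N := by rw [hN]; abel
  have hpowN : ∀ n : ℕ, (1 + N) ^ n = 1 + n • N := by
    intro n
    induction n with
    | zero => simp
    | succ n ih =>
      rw [pow_succ, ih, add_mul, mul_add, mul_add, one_mul, mul_one, smul_mul_assoc, hN2,
        smul_zero, add_zero, succ_nsmul, one_mul]
      abel
  have hMp : M ^ p = 1 := by
    have hsm : (p : ℕ) • N = 0 := by
      ext i j
      simp [nsmul_eq_mul, hpF]
    rw [hMN, hpowN p, hsm, add_zero]
  have hZp : Z ^ p = 1 := by
    ext i j
    rw [Matrix.SpecialLinearGroup.coe_pow]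
    rw [← hM, hMp]
    simp
  have hzp : (⟨Z, hZG⟩ : G) ^ p = 1 := by
    ext
    push_cast
    rw [hZp]
  have hord : orderOf (⟨Z, hZG⟩ : G) = p := by
    have hd : orderOf (⟨Z, hZG⟩ : G) ∣ p := orderOf_dvd_of_pow_eq_one hzp
    rcases (Nat.Prime.eq_one_or_self_of_dvd hp _ hd) with h1 | h1
    · exfalso
      apply hZne
      have := orderOf_eq_one_iff.mp h1
      exact congrArg Subtype.val this
    · exact h1
  have hdvd : p ∣ Nat.card G := hord ▸ orderOf_dvd_natCard _
  rw [hG, hcard] at hdvd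
  have hdvd2 : p ∣ (p ^ h) ^ 2 := dvd_pow (dvd_pow_self p (by omega)) (by norm_num)
  have h1le : 1 ≤ (p ^ h) ^ 2 := Nat.one_le_pow _ _ (Nat.pow_pos hp.pos)
  have hone : p ∣ 1 := by
    have := Nat.dvd_sub hdvd2 hdvd
    rwa [Nat.sub_sub_self h1le] at this
  exact hp.one_lt.ne' (Nat.dvd_one.mp hone)
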